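/- Let λ be real, q_F, q_S nonzero reals, d_F, d_S ≥ 1 natural numbers, and π_F, π_S, p_F, p_S reals. Define λ_IF = (λ·d_F/q_F)·Σ_{i=0}^{d_F−1} C(d_F−1,i)·π_F^i·(1−π_F)^{d_F−1−i}/(i+1); λ_BF = (λ·d_F/q_F)·((1−π_F)^{d_F−1}/d_F)·((1−(1−π_S)^{d_S})·(1−p_S) + (1−π_S)^{d_S}·p_F); λ_IS = (λ·d_S/q_S)·(1−π_F)^{d_F}·Σ_{i=0}^{d_S−1} C(d_S−1,i)·π_S^i·(1−π_S)^{d_S−1−i}·p_S/(i+1); and λ_BS = (λ·d_S/q_S)·(1−π_F)^{d_F}·((1−π_S)^{d_S−1}/d_S)·(1−p_F). Then q_F·(π_F·λ_IF + (1−π_F)·λ_BF) + q_S·(π_S·λ_IS + (1−π_S)·λ_BS) = λ. -/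

import Mathlib

lemma key_sum (d : ℕ) (hd : 1 ≤ d) (x : ℝ) :
    (d : ℝ) * (∑ i ∈ Finset.range d,
        ((d - 1).choose i : ℝ) * x ^ i * (1 - x) ^ (d - 1 - i) / ((i : ℝ) + 1)) * x
      = 1 - (1 - x) ^ d := by
  obtain ⟨e, rfl⟩ : ∃ e, d = e + 1 := ⟨d - 1, by omega⟩
  simp only [Nat.add_sub_cancel]
  have hpow := add_pow x (1 - x) (e + 1)
  have hx : x + (1 - x) = 1 := by ring
  rw [hx, one_pow, Finset.sum_range_succ'] at hpow
  simp only [pow_zero, Nat.sub_zero, Nat.choose_zero_right, Nat.cast_one, one_mul, mul_one] at hpow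
  rw [Finset.mul_sum, Finset.sum_mul]
  have hterm : ∀ i ∈ Finset.range (e + 1),
      (↑(e + 1) : ℝ) * ((e.choose i : ℝ) * x ^ i * (1 - x) ^ (e - i) / ((i : ℝ) + 1)) * x
      = x ^ (i + 1) * (1 - x) ^ (e + 1 - (i + 1)) * ((e + 1).choose (i + 1) : ℝ) := by
    intro i _
    have hc : (e + 1) * e.choose i = (e + 1).choose (i + 1) * (i + 1) :=
      Nat.add_one_mul_choose_eq e i
    have hcR : ((e : ℝ) + 1) * (e.choose i : ℝ) = ((e + 1).choose (i + 1) : ℝ) * ((i : ℝ) + 1) := by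
      exact_mod_cast hc
    have he : e + 1 - (i + 1) = e - i := by omega
    have hne : ((i : ℝ) + 1) ≠ 0 := by positivity
    rw [he]
    field_simp
    push_cast
    linear_combination (x ^ (i + 1) * (1 - x) ^ (e - i)) * hcR
  rw [Finset.sum_congr rfl hterm]
  linarith [hpow]

/-- Total flow conservation for the mean-field arrival rates (4)–(7) of
JIQ-(d_F,d_S): `q_F·(π_F·λ_IF + (1−π_F)·λ_BF) + q_S·(π_S·λ_IS + (1−π_S)·λ_BS) = λ`. -/
theorem stmt_17 (lam qF qS : ℝ) (hqF : qF ≠ 0) (hqS : qS ≠ 0)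
    (dF dS : ℕ) (hdF : 1 ≤ dF) (hdS : 1 ≤ dS)
    (πF πS pF pS : ℝ)
    (lamIF lamBF lamIS lamBS : ℝ)
    (hIF : lamIF = (lam * (dF : ℝ) / qF) *
        ∑ i ∈ Finset.range dF,
          ((dF - 1).choose i : ℝ) * πF ^ i * (1 - πF) ^ (dF - 1 - i) / ((i : ℝ) + 1))
    (hBF : lamBF = (lam * (dF : ℝ) / qF) * ((1 - πF) ^ (dF - 1) / (dF : ℝ)) *
        ((1 - (1 - πS) ^ dS) * (1 - pS) + (1 - πS) ^ dS * pF))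
    (hIS : lamIS = (lam * (dS : ℝ) / qS) * (1 - πF) ^ dF *
        ∑ i ∈ Finset.range dS,
          ((dS - 1).choose i : ℝ) * πS ^ i * (1 - πS) ^ (dS - 1 - i) * pS / ((i : ℝ) + 1))
    (hBS : lamBS = (lam * (dS : ℝ) / qS) * (1 - πF) ^ dF *
        ((1 - πS) ^ (dS - 1) / (dS : ℝ)) * (1 - pF)) :
    qF * (πF * lamIF + (1 - πF) * lamBF) + qS * (πS * lamIS + (1 - πS) * lamBS)
      = lam := by
  have keyF := key_sum dF hdF πF
  have keyS := key_sum dS hdS πS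
  have hFpow : (1 - πF) ^ (dF - 1) * (1 - πF) = (1 - πF) ^ dF := by
    rw [← pow_succ]; congr 1; omega
  have hSpow : (1 - πS) ^ (dS - 1) * (1 - πS) = (1 - πS) ^ dS := by
    rw [← pow_succ]; congr 1; omega
  have hdF0 : (dF : ℝ) ≠ 0 := by positivity
  have hdS0 : (dS : ℝ) ≠ 0 := by positivity
  have h1 : qF * (πF * lamIF) = lam * (1 - (1 - πF) ^ dF) := by
    rw [hIF]; field_simp; linear_combination lam * keyF
  have h2 : qF * ((1 - πF) * lamBF)
      = lam * (1 - πF) ^ dF * ((1 - (1 - πS) ^ dS) * (1 - pS) + (1 - πS) ^ dS * pF) := by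
    rw [hBF]; field_simp
    linear_combination (lam * ((1 - (1 - πS) ^ dS) * (1 - pS) + (1 - πS) ^ dS * pF)) * hFpow
  have h3 : qS * (πS * lamIS) = lam * (1 - πF) ^ dF * pS * (1 - (1 - πS) ^ dS) := by
    have hSsum : (∑ i ∈ Finset.range dS,
        ((dS - 1).choose i : ℝ) * πS ^ i * (1 - πS) ^ (dS - 1 - i) * pS / ((i : ℝ) + 1))
        = pS * ∑ i ∈ Finset.range dS,
        ((dS - 1).choose i : ℝ) * πS ^ i * (1 - πS) ^ (dS - 1 - i) / ((i : ℝ) + 1) := by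
      rw [Finset.mul_sum]
      exact Finset.sum_congr rfl fun i _ => by ring
    rw [hIS, hSsum]; field_simp
    linear_combination (lam * (1 - πF) ^ dF * pS) * keyS
  have h4 : qS * ((1 - πS) * lamBS)
      = lam * (1 - πF) ^ dF * (1 - πS) ^ dS * (1 - pF) := by
    rw [hBS]; field_simp
    linear_combination (lam * (1 - πF) ^ dF * (1 - pF)) * hSpow
  calc qF * (πF * lamIF + (1 - πF) * lamBF) + qS * (πS * lamIS + (1 - πS) * lamBS)
      = qF * (πF * lamIF) + qF * ((1 - πF) * lamBF)
        + (qS * (πS * lamIS) + qS * ((1 - πS) * lamBS)) := by ring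
    _ = lam := by rw [h1, h2, h3, h4]; ring
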